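/- arXiv:2410.19305 — 2 statements merged into one kernel-verified Lean document; each statement's English description precedes it below -/
import Mathlib

section
/- Let 𝔰 be a finite-dimensional simple complex Lie algebra equipped with a norm. There exists δ > 0 (depending on 𝔰 and the norm) such that for every n ≥ 1 and every nonzero Lie algebra homomorphism φ : 𝔰 → 𝔤𝔩_n(ℂ), one has sup{‖φ(w)‖ : w ∈ 𝔰, ‖w‖ ≤ 1} ≥ δ. -/
open scoped Matrix.Norms.L2Operator

attribute [local instance 100] LieRing.ofAssociativeRing

set_option maxHeartbeats 1000000

/-- For a finite-dimensional simple complex Lie algebra `𝔰` with a norm,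
there is `δ > 0` such that every nonzero Lie algebra homomorphism `φ : 𝔰 → 𝔤𝔩_n(ℂ)`
satisfies `sup {‖φ w‖ : ‖w‖ ≤ 1} ≥ δ`, where matrices carry the operator norm. -/
theorem stmt4 (𝔰 : Type*) [LieRing 𝔰] [LieAlgebra ℂ 𝔰] [FiniteDimensional ℂ 𝔰]
    [LieAlgebra.IsSimple ℂ 𝔰]
    (nrm : 𝔰 → ℝ)
    (hnrm_eq : ∀ x, nrm x = 0 ↔ x = 0)
    (hnrm_smul : ∀ (c : ℂ) (x : 𝔰), nrm (c • x) = ‖c‖ * nrm x)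
    (hnrm_add : ∀ x y, nrm (x + y) ≤ nrm x + nrm y) :
    ∃ δ : ℝ, 0 < δ ∧
      ∀ (n : ℕ), 1 ≤ n →
        ∀ φ : 𝔰 →ₗ⁅ℂ⁆ Matrix (Fin n) (Fin n) ℂ, φ ≠ 0 →
          δ ≤ sSup {x : ℝ | ∃ w : 𝔰, nrm w ≤ 1 ∧ x = ‖φ w‖} := by
  -- Put a normed space structure on 𝔰 coming from `nrm`.
  letI : NormedAddCommGroup 𝔰 := AddGroupNorm.toNormedAddCommGroup
    { toFun := nrm
      map_zero' := (hnrm_eq 0).mpr rfl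
      add_le' := hnrm_add
      neg' := fun x => by simpa using hnrm_smul (-1) x
      eq_zero_of_map_eq_zero' := fun x hx => (hnrm_eq x).mp hx }
  letI : NormedSpace ℂ 𝔰 := ⟨fun c x => le_of_eq (hnrm_smul c x)⟩
  have hnorm_def : ∀ x : 𝔰, ‖x‖ = nrm x := fun _ => rfl
  -- Brackets span 𝔰.
  have htop : ⁅(⊤ : LieIdeal ℂ 𝔰), (⊤ : LieIdeal ℂ 𝔰)⁆ = ⊤ := by
    rcases LieAlgebra.IsSimple.eq_bot_or_eq_top ⁅(⊤ : LieIdeal ℂ 𝔰), (⊤ : LieIdeal ℂ 𝔰)⁆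
      with h | h
    · exfalso
      apply LieAlgebra.IsSimple.non_abelian ℂ (L := 𝔰)
      have : IsLieAbelian (⊤ : LieIdeal ℂ 𝔰) :=
        (LieSubmodule.lie_abelian_iff_lie_self_eq_bot (⊤ : LieIdeal ℂ 𝔰)).mpr h
      exact (lie_abelian_iff_equiv_lie_abelian LieIdeal.topEquiv).mp this
    · exact h
  have hspan : Submodule.span ℂ {m : 𝔰 | ∃ x y : 𝔰, ⁅x, y⁆ = m} = ⊤ := by
    have h2 := LieSubmodule.lieIdeal_oper_eq_linear_span'
      (R := ℂ) (L := 𝔰) (M := 𝔰) (I := ⊤) (N := ⊤)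
    rw [htop] at h2
    have hset : {m : 𝔰 | ∃ x ∈ (⊤ : LieIdeal ℂ 𝔰), ∃ n ∈ (⊤ : LieIdeal ℂ 𝔰), ⁅x, n⁆ = m}
        = {m : 𝔰 | ∃ x y : 𝔰, ⁅x, y⁆ = m} := by
      ext m
      simp
    rw [hset] at h2
    rw [← h2]
    rfl
  -- fix a basis
  set d := Module.finrank ℂ 𝔰 with hd
  let b : Module.Basis (Fin d) ℂ 𝔰 := Module.finBasis ℂ 𝔰
  -- Each basis vector is a finite sum of brackets.
  have hdecomp : ∀ j : Fin d, ∃ (k : ℕ) (x y : Fin k → 𝔰), b j = ∑ i, ⁅x i, y i⁆ := by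
    intro j
    have hmem : b j ∈ Submodule.span ℂ {m : 𝔰 | ∃ x y : 𝔰, ⁅x, y⁆ = m} := by
      rw [hspan]; trivial
    rw [Submodule.mem_span_set'] at hmem
    obtain ⟨k, c, g, hg⟩ := hmem
    choose x y hxy using fun i => (g i).2
    refine ⟨k, fun i => c i • x i, y, ?_⟩
    rw [← hg]
    refine Finset.sum_congr rfl fun i _ => ?_
    rw [smul_lie, hxy]
  -- For each j, a bound on ‖φ (b j)‖ in terms of the operator bound M.
  have hDj : ∀ j : Fin d, ∃ D : ℝ, 0 ≤ D ∧
      ∀ (n : ℕ) (φ : 𝔰 →ₗ⁅ℂ⁆ Matrix (Fin n) (Fin n) ℂ) (M : ℝ), 0 ≤ M →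
        (∀ v : 𝔰, ‖φ v‖ ≤ M * ‖v‖) → ‖φ (b j)‖ ≤ D * (M * M) := by
    intro j
    obtain ⟨k, x, y, hxy⟩ := hdecomp j
    refine ⟨∑ i, 2 * (‖x i‖ * ‖y i‖), Finset.sum_nonneg fun i _ => by positivity, ?_⟩
    intro n φ M hM hφ
    have hpush : φ (∑ i, ⁅x i, y i⁆) = ∑ i, φ ⁅x i, y i⁆ := by
      rw [← LieHom.coe_toLinearMap, map_sum]
    rw [hxy, hpush, Finset.sum_mul]
    refine (norm_sum_le _ _).trans (Finset.sum_le_sum fun i _ => ?_)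
    rw [LieHom.map_lie, Ring.lie_def]
    calc ‖φ (x i) * φ (y i) - φ (y i) * φ (x i)‖
        ≤ ‖φ (x i) * φ (y i)‖ + ‖φ (y i) * φ (x i)‖ := norm_sub_le _ _
      _ ≤ ‖φ (x i)‖ * ‖φ (y i)‖ + ‖φ (y i)‖ * ‖φ (x i)‖ :=
          add_le_add (norm_mul_le _ _) (norm_mul_le _ _)
      _ ≤ (M * ‖x i‖) * (M * ‖y i‖) + (M * ‖y i‖) * (M * ‖x i‖) := by
          gcongr <;> first | exact hφ _ | positivity | exact norm_nonneg _
      _ = 2 * (‖x i‖ * ‖y i‖) * (M * M) := by ring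
  choose D hD0 hD using hDj
  -- coordinate functionals are bounded
  let K : Fin d → ℝ := fun j => ‖LinearMap.toContinuousLinearMap (b.coord j)‖
  have hK : ∀ (j : Fin d) (w : 𝔰), ‖b.repr w j‖ ≤ K j * ‖w‖ := by
    intro j w
    have := (LinearMap.toContinuousLinearMap (b.coord j)).le_opNorm w
    simpa [Module.Basis.coord_apply] using this
  set C : ℝ := ∑ j, K j * D j with hC
  have hC0 : 0 ≤ C := Finset.sum_nonneg fun j _ =>
    mul_nonneg (norm_nonneg _) (hD0 j)
  set C' : ℝ := max C 1 with hC'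
  have hC'pos : (0 : ℝ) < C' := lt_of_lt_of_le one_pos (le_max_right _ _)
  refine ⟨C'⁻¹, inv_pos.mpr hC'pos, ?_⟩
  intro n hn φ hφ0
  -- the continuous linear map associated to φ
  let φ' : 𝔰 →L[ℂ] Matrix (Fin n) (Fin n) ℂ :=
    LinearMap.toContinuousLinearMap φ.toLinearMap
  have hφ'apply : ∀ v : 𝔰, φ' v = φ v := fun _ => rfl
  set M : ℝ := ‖φ'‖ with hM
  have hM0 : 0 ≤ M := hM ▸ norm_nonneg φ'
  have hMle : ∀ v : 𝔰, ‖φ v‖ ≤ M * ‖v‖ := fun v => by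
    simpa [hφ'apply] using φ'.le_opNorm v
  -- global bound : ‖φ w‖ ≤ C * M² * ‖w‖
  have hbound : ∀ w : 𝔰, ‖φ w‖ ≤ C * (M * M) * ‖w‖ := by
    intro w
    have hpush : φ w = ∑ j, b.repr w j • φ (b j) := by
      conv_lhs => rw [← b.sum_repr w]
      rw [← LieHom.coe_toLinearMap, map_sum]
      simp only [LinearMap.map_smul]
    rw [hpush]
    calc ‖∑ j, b.repr w j • φ (b j)‖
        ≤ ∑ j, ‖b.repr w j • φ (b j)‖ := norm_sum_le _ _
      _ ≤ ∑ j, (K j * ‖w‖) * (D j * (M * M)) := by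
          refine Finset.sum_le_sum fun j _ => ?_
          rw [norm_smul]
          exact mul_le_mul (hK j w) (hD j n φ M hM0 hMle) (norm_nonneg _)
            (mul_nonneg (norm_nonneg _) (norm_nonneg w))
      _ = C * (M * M) * ‖w‖ := by
          rw [hC, Finset.sum_mul, Finset.sum_mul]
          exact Finset.sum_congr rfl fun j _ => by ring
  -- hence M ≤ C' * M * M
  have hMM : M ≤ C' * M * M := by
    have h1 : M ≤ C * (M * M) := by
      rw [hM]
      refine φ'.opNorm_le_bound (by positivity) fun w => ?_
      simpa [hφ'apply] using hbound w
    calc M ≤ C * (M * M) := h1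
      _ ≤ C' * M * M := by
          rw [mul_assoc]
          exact mul_le_mul_of_nonneg_right (le_max_left _ _) (by positivity)
  have hMpos : 0 < M := by
    rcases hM0.lt_or_eq with h | h
    · exact h
    · exfalso
      apply hφ0
      refine LieHom.ext fun v => ?_
      have h1 := hMle v
      rw [← h, zero_mul] at h1
      have h2 : φ v = 0 := norm_le_zero_iff.mp h1
      simpa using h2
  have h1 : 1 ≤ C' * M := by nlinarith [hMM, hMpos, hC'pos]
  have hδM : C'⁻¹ ≤ M := by
    nlinarith [h1, inv_nonneg.mpr hC'pos.le, inv_mul_cancel₀ hC'pos.ne']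
  -- identify the sup with the operator norm
  have hset : {x : ℝ | ∃ w : 𝔰, nrm w ≤ 1 ∧ x = ‖φ w‖}
      = (fun w : 𝔰 => ‖φ' w‖) '' Metric.closedBall 0 1 := by
    ext r
    constructor
    · rintro ⟨w, hw, rfl⟩
      exact ⟨w, by simpa [mem_closedBall_zero_iff, hnorm_def] using hw, rfl⟩
    · rintro ⟨w, hw, rfl⟩
      exact ⟨w, by simpa [mem_closedBall_zero_iff, hnorm_def] using hw, rfl⟩
  rw [hset, ContinuousLinearMap.sSup_unitClosedBall_eq_norm]
  exact hδM
end

section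
/- Let N ≥ 2, d ≥ 1, and let D = C(N² + d, d) be the dimension of the space of polynomials of total degree at most d in the N² matrix entries. Let γ_1,…,γ_k ∈ SL_N(ℚ) be such that the set {γ_1,…,γ_k} is closed under taking inverses, and set γ_0 = I (the identity matrix). Suppose p ∈ ℚ[x_{11},…,x_{NN}] is a polynomial of total degree at most d such that p(γ_{i_1} γ_{i_2} ⋯ γ_{i_{D+1}}) = 0 for every tuple (i_1,…,i_{D+1}) ∈ {0,1,…,k}^{D+1}. Then p(γ) = 0 for every element γ of the subgroup of SL_N(ℚ) generated by γ_1,…,γ_k. -/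
open MvPolynomial

namespace Stmt11Aux

/-- generic eval-of-aeval composition -/
lemma eval_aeval' {σ τ : Type*} (f : τ → ℚ) (g : σ → MvPolynomial τ ℚ) (q : MvPolynomial σ ℚ) :
    eval f (aeval g q) = eval (fun s => eval f (g s)) q := by
  induction q using MvPolynomial.induction_on with
  | C a => simp
  | add p q hp hq => simp only [map_add, hp, hq]
  | mul_X p i h => simp only [map_mul, aeval_X, eval_X, h]

lemma aeval_eq_eval' {σ : Type*} (f : σ → ℚ) (q : MvPolynomial σ ℚ) :
    aeval f q = eval f q :=
  RingHom.congr_fun (coe_aeval_eq_eval f) q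

lemma tdeg_aeval_le {σ τ : Type*} (g : σ → MvPolynomial τ ℚ)
    (hg : ∀ i, (g i).totalDegree ≤ 1) (q : MvPolynomial σ ℚ) :
    (aeval g q).totalDegree ≤ q.totalDegree := by
  conv_lhs => rw [q.as_sum]
  rw [map_sum]
  apply totalDegree_finsetSum_le
  intro v hv
  rw [aeval_monomial]
  refine (totalDegree_mul _ _).trans ?_
  have h1 : (algebraMap ℚ (MvPolynomial τ ℚ) (coeff v q)).totalDegree = 0 := by
    rw [MvPolynomial.algebraMap_eq]; exact totalDegree_C _
  rw [h1, zero_add]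
  refine (totalDegree_finset_prod _ _).trans ?_
  refine le_trans ?_ (le_totalDegree hv)
  rw [Finsupp.sum]
  apply Finset.sum_le_sum
  intro i _
  calc ((g i ^ v i).totalDegree) ≤ v i * (g i).totalDegree := totalDegree_pow _ _
    _ ≤ v i * 1 := Nat.mul_le_mul_left _ (hg i)
    _ = v i := Nat.mul_one _

lemma finrank_restrictTotalDegree_le (σ : Type*) [Fintype σ] [DecidableEq σ] (d : ℕ) :
    Module.finrank ℚ (restrictTotalDegree σ ℚ d) ≤ (Fintype.card σ + d).choose d := by
  classical
  set S : Set (σ →₀ ℕ) := {n | (n.sum fun _ e => e) ≤ d} with hS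
  have hJc : ∀ f : S, Multiset.card (Finsupp.toMultiset (f : σ →₀ ℕ)) ≤ d := by
    rintro ⟨f, hf⟩
    rw [Finsupp.card_toMultiset]
    exact hf
  let J : S → Sym (Option σ) d := fun f =>
    ⟨Multiset.map some (Finsupp.toMultiset (f : σ →₀ ℕ)) +
      Multiset.replicate (d - Multiset.card (Finsupp.toMultiset (f : σ →₀ ℕ))) none, by
        have h := hJc f
        rw [Multiset.card_add, Multiset.card_map, Multiset.card_replicate]
        omega⟩
  have hcount : ∀ (f : S) (a : σ),
      Multiset.count (some a) ((J f : Sym (Option σ) d) : Multiset (Option σ)) = (f : σ →₀ ℕ) a := by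
    intro f a
    show Multiset.count (some a) (Multiset.map some (Finsupp.toMultiset (f : σ →₀ ℕ)) + _) = _
    rw [Multiset.count_add, Multiset.count_map_eq_count' some _ (Option.some_injective σ) a,
      Multiset.count_replicate, Finsupp.count_toMultiset]
    simp
  have hJinj : Function.Injective J := by
    intro f g h
    ext a
    show (f : σ →₀ ℕ) a = (g : σ →₀ ℕ) a
    rw [← hcount f a, ← hcount g a, h]
  haveI : Fintype S := Fintype.ofInjective J hJinj
  have h1 : Module.finrank ℚ (restrictTotalDegree σ ℚ d) = Fintype.card S :=
    Module.finrank_eq_card_basis (basisRestrictSupport ℚ S)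
  have h2 : Fintype.card S ≤ Fintype.card (Sym (Option σ) d) :=
    Fintype.card_le_of_injective J hJinj
  rw [h1]
  refine h2.trans ?_
  rw [Sym.card_sym_eq_choose, Fintype.card_option]
  have : Fintype.card σ + 1 + d - 1 = Fintype.card σ + d := by omega
  rw [this]

variable {N k : ℕ}

abbrev SL (N : ℕ) := Matrix.SpecialLinearGroup (Fin N) ℚ

def ent (g : SL N) : Fin N × Fin N → ℚ := fun q => (g : Matrix (Fin N) (Fin N) ℚ) q.1 q.2

def Pp (γ : Fin (k + 1) → SL N) (m : ℕ) (ι : Fin m → Fin (k + 1)) : SL N :=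
  (List.ofFn fun t => γ (ι t)).prod

lemma Pp_zero (γ : Fin (k + 1) → SL N) (ι : Fin 0 → Fin (k + 1)) : Pp γ 0 ι = 1 := by
  simp [Pp]

lemma Pp_one (γ : Fin (k + 1) → SL N) (ι : Fin 1 → Fin (k + 1)) : Pp γ 1 ι = γ (ι 0) := by
  simp [Pp]

lemma Pp_add (γ : Fin (k + 1) → SL N) {m n : ℕ} (ι : Fin (m + n) → Fin (k + 1)) :
    Pp γ (m + n) ι =
      Pp γ m (fun i => ι (Fin.castAdd n i)) * Pp γ n (fun j => ι (Fin.natAdd m j)) := by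
  simp only [Pp]
  rw [List.ofFn_add, List.prod_append]
  rfl

lemma Pp_append (γ : Fin (k + 1) → SL N) {m n : ℕ} (ι : Fin m → Fin (k + 1))
    (κ : Fin n → Fin (k + 1)) :
    Pp γ (m + n) (Fin.append ι κ) = Pp γ m ι * Pp γ n κ := by
  rw [Pp_add]
  simp only [Fin.append_left, Fin.append_right]

lemma Pp_succ (γ : Fin (k + 1) → SL N) {m : ℕ} (ι : Fin (m + 1) → Fin (k + 1)) :
    Pp γ (m + 1) ι = Pp γ m (fun i => ι (Fin.castAdd 1 i)) * γ (ι (Fin.natAdd m 0)) := by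
  rw [Pp_add, Pp_one]

lemma Pp_cons (γ : Fin (k + 1) → SL N) {m : ℕ} (ι : Fin (m + 1) → Fin (k + 1)) :
    Pp γ (m + 1) ι = γ (ι 0) * Pp γ m (fun i => ι i.succ) := by
  simp [Pp, List.ofFn_succ, Function.comp]

lemma ent_mul (g h : SL N) (q : Fin N × Fin N) :
    ent (g * h) q = ∑ c, ent g (q.1, c) * ent h (c, q.2) := by
  simp [ent, Matrix.mul_apply]

/-- right-translation operator on polynomials -/
noncomputable def Tr (A : SL N) :
    MvPolynomial (Fin N × Fin N) ℚ →ₐ[ℚ] MvPolynomial (Fin N × Fin N) ℚ :=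
  aeval (fun s => ∑ c, X (s.1, c) * C (ent A (c, s.2)))

lemma eval_Tr (A g : SL N) (q : MvPolynomial (Fin N × Fin N) ℚ) :
    eval (ent g) (Tr A q) = eval (ent (g * A)) q := by
  rw [Tr, eval_aeval']
  have h : (fun s : Fin N × Fin N =>
      eval (ent g) (∑ c, X (s.1, c) * C (ent A (c, s.2)))) = ent (g * A) := by
    funext s
    rw [ent_mul]
    simp [ent]
  rw [h]

lemma deg_Tr (A : SL N) (q : MvPolynomial (Fin N × Fin N) ℚ) :
    (Tr A q).totalDegree ≤ q.totalDegree := by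
  apply tdeg_aeval_le
  intro s
  apply totalDegree_finsetSum_le
  intro c _
  refine (totalDegree_mul _ _).trans ?_
  simp [totalDegree_X, totalDegree_C]

noncomputable def KK (γ : Fin (k + 1) → SL N) (d m : ℕ) :
    Submodule ℚ (MvPolynomial (Fin N × Fin N) ℚ) :=
  restrictTotalDegree _ ℚ d ⊓
    ⨅ ι : Fin m → Fin (k + 1), LinearMap.ker (aeval (R := ℚ) (ent (Pp γ m ι))).toLinearMap

lemma mem_KK {γ : Fin (k + 1) → SL N} {d m : ℕ} {q : MvPolynomial (Fin N × Fin N) ℚ} :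
    q ∈ KK γ d m ↔ q.totalDegree ≤ d ∧
      ∀ ι : Fin m → Fin (k + 1), eval (ent (Pp γ m ι)) q = 0 := by
  simp [KK, Submodule.mem_inf, Submodule.mem_iInf, LinearMap.mem_ker,
    mem_restrictTotalDegree, aeval_eq_eval']

end Stmt11Aux
/-- If a polynomial `p` of degree at most `d` vanishes on all products of
`D + 1` of the generators `γ_0 = 1, γ_1, …, γ_k` (a family closed under inverses), where
`D = C(N² + d, d)`, then `p` vanishes on the whole group generated by `γ_1, …, γ_k`. -/
theorem stmt11 (N d : ℕ) (hN : 2 ≤ N) (hd : 1 ≤ d) (k : ℕ)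
    (γ : Fin (k + 1) → Matrix.SpecialLinearGroup (Fin N) ℚ)
    (hγ0 : γ 0 = 1)
    (hinv : ∀ i, ∃ j, γ j = (γ i)⁻¹)
    (p : MvPolynomial (Fin N × Fin N) ℚ)
    (hdeg : p.totalDegree ≤ d)
    (hvanish : ∀ ι : Fin (Nat.choose (N ^ 2 + d) d + 1) → Fin (k + 1),
      MvPolynomial.eval
        (fun q => (((List.ofFn fun t => γ (ι t)).prod : Matrix.SpecialLinearGroup (Fin N) ℚ) :
            Matrix (Fin N) (Fin N) ℚ) q.1 q.2) p = 0) :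
    ∀ g ∈ Subgroup.closure (Set.range γ),
      MvPolynomial.eval
        (fun q => ((g : Matrix.SpecialLinearGroup (Fin N) ℚ) :
            Matrix (Fin N) (Fin N) ℚ) q.1 q.2) p = 0 := by
  classical
  set D := Nat.choose (N ^ 2 + d) d with hD
  choose jf hjf using hinv
  have hfd : ∀ m, FiniteDimensional ℚ (Stmt11Aux.KK γ d m) := fun m =>
    Submodule.finiteDimensional_of_le inf_le_left
  have hmono : ∀ m, Stmt11Aux.KK γ d (m + 1) ≤ Stmt11Aux.KK γ d m := by
    intro m q hq
    rw [Stmt11Aux.mem_KK] at hq ⊢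
    refine ⟨hq.1, fun ι => ?_⟩
    have h2 := hq.2 (Fin.append ι (fun _ : Fin 1 => (0 : Fin (k + 1))))
    rw [Stmt11Aux.Pp_append, Stmt11Aux.Pp_one, hγ0, mul_one] at h2
    exact h2
  have hanti : Antitone (Stmt11Aux.KK γ d) := antitone_nat_of_succ_le hmono
  have hTr : ∀ m (j : Fin (k + 1)) q, q ∈ Stmt11Aux.KK γ d (m + 1) →
      Stmt11Aux.Tr (γ j) q ∈ Stmt11Aux.KK γ d m := by
    intro m j q hq
    rw [Stmt11Aux.mem_KK] at hq ⊢
    refine ⟨(Stmt11Aux.deg_Tr _ _).trans hq.1, fun ι => ?_⟩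
    rw [Stmt11Aux.eval_Tr]
    have h2 := hq.2 (Fin.append ι (fun _ : Fin 1 => j))
    rw [Stmt11Aux.Pp_append, Stmt11Aux.Pp_one] at h2
    exact h2
  have hstep : ∀ m, Stmt11Aux.KK γ d m = Stmt11Aux.KK γ d (m + 1) →
      ∀ m', m ≤ m' → Stmt11Aux.KK γ d m' = Stmt11Aux.KK γ d m := by
    intro m hm m' hm'
    induction m', hm' using Nat.le_induction with
    | base => rfl
    | succ m' hmm' IH =>
      refine le_antisymm ((hmono m').trans (le_of_eq IH)) ?_
      intro q hq
      rw [Stmt11Aux.mem_KK]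
      refine ⟨(Stmt11Aux.mem_KK.mp hq).1, fun ι => ?_⟩
      rw [Stmt11Aux.Pp_succ, ← Stmt11Aux.eval_Tr]
      have hqm1 : q ∈ Stmt11Aux.KK γ d (m + 1) := hm ▸ hq
      have hT : Stmt11Aux.Tr (γ (ι (Fin.natAdd m' 0))) q ∈ Stmt11Aux.KK γ d m' := by
        rw [IH]
        exact hTr m _ q hqm1
      exact (Stmt11Aux.mem_KK.mp hT).2 _
  have hVle : Module.finrank ℚ (MvPolynomial.restrictTotalDegree (Fin N × Fin N) ℚ d) ≤ D := by
    refine le_trans (Stmt11Aux.finrank_restrictTotalDegree_le _ d) ?_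
    have hcard : Fintype.card (Fin N × Fin N) = N ^ 2 := by
      simp [Fintype.card_prod, pow_two]
    rw [hcard]
  have hstab : ∃ m, 1 ≤ m ∧ m ≤ D + 1 ∧
      Stmt11Aux.KK γ d m = Stmt11Aux.KK γ d (m + 1) := by
    by_contra hcon
    push_neg at hcon
    have hlt : ∀ m, 1 ≤ m → m ≤ D + 1 →
        Stmt11Aux.KK γ d (m + 1) < Stmt11Aux.KK γ d m :=
      fun m h1 h2 => lt_of_le_of_ne (hmono m) (fun he => hcon m h1 h2 he.symm)
    have hchain : ∀ t, t ≤ D + 1 →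
        Module.finrank ℚ (Stmt11Aux.KK γ d (1 + t)) + t ≤
          Module.finrank ℚ (Stmt11Aux.KK γ d 1) := by
      intro t
      induction t with
      | zero => intro _; simp
      | succ t IH =>
        intro ht
        have h1 : Module.finrank ℚ (Stmt11Aux.KK γ d (1 + (t + 1))) <
            Module.finrank ℚ (Stmt11Aux.KK γ d (1 + t)) := by
          haveI := hfd (1 + t)
          exact Submodule.finrank_lt_finrank_of_lt (hlt (1 + t) (by omega) (by omega))
        have h2 := IH (by omega)
        omega
    have hlast := hchain (D + 1) le_rfl
    have hK1 : Module.finrank ℚ (Stmt11Aux.KK γ d 1) ≤ D :=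
      le_trans (Submodule.finrank_mono inf_le_left) hVle
    omega
  have hpD : p ∈ Stmt11Aux.KK γ d (D + 1) :=
    Stmt11Aux.mem_KK.mpr ⟨hdeg, fun ι => hvanish ι⟩
  have hpAll : ∀ m, p ∈ Stmt11Aux.KK γ d m := by
    obtain ⟨m₀, hm1, hmD, hmeq⟩ := hstab
    intro m
    by_cases hc : m ≤ D + 1
    · exact hanti hc hpD
    · have h1 : Stmt11Aux.KK γ d m = Stmt11Aux.KK γ d m₀ := hstep m₀ hmeq m (by omega)
      rw [h1]
      exact hanti hmD hpD
  have hinvP : ∀ m (ι : Fin m → Fin (k + 1)), ∃ (m' : ℕ) (ι' : Fin m' → Fin (k + 1)),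
      (Stmt11Aux.Pp γ m ι)⁻¹ = Stmt11Aux.Pp γ m' ι' := by
    intro m
    induction m with
    | zero =>
      intro ι
      exact ⟨0, Fin.elim0, by rw [Stmt11Aux.Pp_zero, Stmt11Aux.Pp_zero, inv_one]⟩
    | succ m IH =>
      intro ι
      obtain ⟨m', ι', hι'⟩ := IH (fun i => ι i.succ)
      refine ⟨m' + 1, Fin.append ι' (fun _ => jf (ι 0)), ?_⟩
      rw [Stmt11Aux.Pp_cons, mul_inv_rev, hι', Stmt11Aux.Pp_append, Stmt11Aux.Pp_one, hjf]
  intro g hg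
  have hq : ∃ m, ∃ ι : Fin m → Fin (k + 1), g = Stmt11Aux.Pp γ m ι := by
    refine Subgroup.closure_induction ?_ ?_ ?_ ?_ hg
    · rintro x ⟨i, rfl⟩
      exact ⟨1, fun _ => i, (Stmt11Aux.Pp_one γ (fun _ => i)).symm⟩
    · exact ⟨0, Fin.elim0, (Stmt11Aux.Pp_zero γ _).symm⟩
    · rintro x y hx hy ⟨m₁, ι₁, rfl⟩ ⟨m₂, ι₂, rfl⟩
      exact ⟨m₁ + m₂, Fin.append ι₁ ι₂, (Stmt11Aux.Pp_append γ ι₁ ι₂).symm⟩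
    · rintro x hx ⟨m, ι, rfl⟩
      exact hinvP m ι
  obtain ⟨m, ι, rfl⟩ := hq
  exact (Stmt11Aux.mem_KK.mp (hpAll m)).2 ι
end
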